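/- For 1 < κ < 2, the derivative of s ↦ s·(1 - s(κ-1))·B(s + κ(1-s), 2-κ) evaluated at s = 1/2 equals ((κ-1)(3-κ)/4)·π·tan((2-κ)π/2)·B((1+κ)/2, 2-κ), and this quantity is positive. -/

import Mathlib

noncomputable def betaFn (x y : ℝ) : ℝ := Real.Gamma x * Real.Gamma y / Real.Gamma (x + y)

open Real Filter

lemma gamma_rec_deriv (x : ℝ) (hx : ∀ n : ℕ, x ≠ -n) :
    deriv Real.Gamma (x + 1) = Real.Gamma x + x * deriv Real.Gamma x := by
  have hx0 : x ≠ 0 := by simpa using hx 0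
  have hx1 : ∀ n : ℕ, x + 1 ≠ -n := by
    intro n h
    exact hx (n + 1) (by push_cast; linarith)
  have hd : DifferentiableAt ℝ Real.Gamma x := Real.differentiableAt_Gamma hx
  have hd1 : DifferentiableAt ℝ Real.Gamma (x + 1) := Real.differentiableAt_Gamma hx1
  have h1 : HasDerivAt (fun y => Real.Gamma (y + 1)) (deriv Real.Gamma (x + 1)) x := by
    simpa [Function.comp_def] using (hd1.hasDerivAt.comp x ((hasDerivAt_id x).add_const 1))
  have h2 : HasDerivAt (fun y => y * Real.Gamma y)
      (Real.Gamma x + x * deriv Real.Gamma x) x := by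
    simpa using (hasDerivAt_id x).fun_mul hd.hasDerivAt
  have heq : (fun y => Real.Gamma (y + 1)) =ᶠ[nhds x] fun y => y * Real.Gamma y := by
    filter_upwards [isOpen_compl_singleton.mem_nhds (by simpa using hx0 : x ∈ ({0}ᶜ : Set ℝ))]
      with y hy
    exact Real.Gamma_add_one (by simpa using hy)
  rw [← h1.deriv, heq.deriv_eq, h2.deriv]

lemma gamma_reflect_deriv (x : ℝ) (hx : ∀ n : ℕ, x ≠ -n) (hx1 : ∀ n : ℕ, 1 - x ≠ -n)
    (hs : Real.sin (π * x) ≠ 0) :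
    deriv Real.Gamma x * Real.Gamma (1 - x) - Real.Gamma x * deriv Real.Gamma (1 - x)
      = -π ^ 2 * Real.cos (π * x) / (Real.sin (π * x)) ^ 2 := by
  have hd : DifferentiableAt ℝ Real.Gamma x := Real.differentiableAt_Gamma hx
  have hd1 : DifferentiableAt ℝ Real.Gamma (1 - x) := Real.differentiableAt_Gamma hx1
  have h2 : HasDerivAt (fun y => Real.Gamma (1 - y)) (-deriv Real.Gamma (1 - x)) x := by
    simpa [Function.comp_def] using hd1.hasDerivAt.comp x ((hasDerivAt_const x (1:ℝ)).sub (hasDerivAt_id x))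
  have h1 : HasDerivAt (fun y => Real.Gamma y * Real.Gamma (1 - y))
      (deriv Real.Gamma x * Real.Gamma (1 - x) - Real.Gamma x * deriv Real.Gamma (1 - x)) x := by
    have := hd.hasDerivAt.fun_mul h2
    refine this.congr_deriv ?_
    ring
  have hsin : HasDerivAt (fun y : ℝ => Real.sin (π * y)) (Real.cos (π * x) * π) x := by
    simpa [Function.comp_def] using (Real.hasDerivAt_sin (π * x)).comp x ((hasDerivAt_id x).const_mul π)
  have h3 : HasDerivAt (fun y : ℝ => π / Real.sin (π * y))
      (-π ^ 2 * Real.cos (π * x) / (Real.sin (π * x)) ^ 2) x := by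
    have := (hasDerivAt_const x π).fun_div hsin hs
    refine this.congr_deriv ?_
    field_simp
    ring
  have heq : (fun y => Real.Gamma y * Real.Gamma (1 - y)) = fun y : ℝ => π / Real.sin (π * y) := by
    funext y
    exact Real.Gamma_mul_Gamma_one_sub y
  rw [← h1.deriv, heq, h3.deriv]

lemma key_alg (k q P P' Q Q' Gc S C pi' R R' : ℝ) (hQ : Q ≠ 0) (hq : q ≠ 0) (hq1 : q + 1 ≠ 0)
    (hS : S ≠ 0) (hk : k = 1 - 2 * q)
    (hR : R = (q + 1) * (q * Q)) (hR' : R' = q * Q + (q + 1) * (Q + q * Q'))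
    (h1 : (P' * Q - P * Q') * S ^ 2 = -pi' ^ 2 * C) (h2 : P * Q * S = pi') :
    (2 - k) * (P * Gc / R) + 1/2 * (1 - 1/2 * (k - 1)) *
        ((P' * (1 - k) * Gc * R - P * Gc * (R' * (1 - k))) / R ^ 2)
      = (k - 1) * (3 - k) / 4 * pi' * (C / S) * (P * Gc / R) := by
  have hR0 : R ≠ 0 := by rw [hR]; exact mul_ne_zero hq1 (mul_ne_zero hq hQ)
  have h3 : (P' * Q - P * Q') * S = -(P * Q * pi' * C) := by
    apply mul_left_cancel₀ hS
    calc S * ((P' * Q - P * Q') * S) = (P' * Q - P * Q') * S ^ 2 := by ring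
    _ = -pi' ^ 2 * C := h1
    _ = -(pi' * (pi' * C)) := by ring
    _ = S * -(P * Q * pi' * C) := by rw [← h2]; ring
  subst hk hR hR'
  field_simp
  linear_combination (16 * q ^ 2 * (1 + q) ^ 2 * Gc) * h3

theorem deriv_at_half_kappa_gt_one (κ : ℝ) (hκ1 : 1 < κ) (hκ2 : κ < 2) :
    deriv (fun s : ℝ => s * (1 - s * (κ - 1)) * betaFn (s + κ * (1 - s)) (2 - κ)) (1/2)
      = ((κ - 1) * (3 - κ) / 4) * Real.pi * Real.tan ((2 - κ) / 2 * Real.pi) *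
        betaFn ((1 + κ) / 2) (2 - κ) ∧
    0 < ((κ - 1) * (3 - κ) / 4) * Real.pi * Real.tan ((2 - κ) / 2 * Real.pi) *
        betaFn ((1 + κ) / 2) (2 - κ) := by
  set p : ℝ := (1 + κ) / 2 with hp
  set q : ℝ := (1 - κ) / 2 with hq
  set c : ℝ := 2 - κ with hc
  have hq_range : -1/2 < q ∧ q < 0 := by constructor <;> (rw [hq]; linarith)
  have hp_pos : (0:ℝ) < p := by rw [hp]; linarith
  have hc_pos : (0:ℝ) < c := by rw [hc]; linarith
  have hpc : p + c = q + 1 + 1 := by rw [hp, hq, hc]; ring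
  have h1p : 1 - p = q := by rw [hp, hq]; ring
  have hqne : ∀ n : ℕ, q ≠ -n := by
    intro n h
    rcases n with _ | n
    · simp at h; linarith [hq_range.2]
    · push_cast at h
      have : (0:ℝ) ≤ (n:ℝ) := Nat.cast_nonneg n
      linarith [hq_range.1]
  have hq1ne : ∀ n : ℕ, q + 1 ≠ -n := by
    intro n h
    exact hqne (n + 1) (by push_cast; push_cast at h; linarith)
  have pos_ne : ∀ x : ℝ, 0 < x → ∀ n : ℕ, x ≠ -n := by
    intro x hx n h
    have h0 : (0:ℝ) ≤ (n:ℝ) := Nat.cast_nonneg n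
    rw [h] at hx
    linarith
  have hpne := pos_ne p hp_pos
  -- trig facts
  have hκpi1 : π / 2 < π * κ / 2 := by nlinarith [pi_pos]
  have hκpi2 : π * κ / 2 < π := by nlinarith [pi_pos]
  have hsinp : Real.sin (π * p) = Real.cos (π * κ / 2) := by
    have h : π * p = π / 2 + π * κ / 2 := by rw [hp]; ring
    rw [h, Real.sin_add, Real.sin_pi_div_two, Real.cos_pi_div_two]; ring
  have hcosp : Real.cos (π * p) = -Real.sin (π * κ / 2) := by
    have h : π * p = π / 2 + π * κ / 2 := by rw [hp]; ring
    rw [h, Real.cos_add, Real.sin_pi_div_two, Real.cos_pi_div_two]; ring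
  have hcos_neg : Real.cos (π * κ / 2) < 0 :=
    Real.cos_neg_of_pi_div_two_lt_of_lt hκpi1 (by linarith [pi_pos])
  have hsinp_ne : Real.sin (π * p) ≠ 0 := by rw [hsinp]; exact ne_of_lt hcos_neg
  have htan : Real.tan (c / 2 * π) = Real.cos (π * p) / Real.sin (π * p) := by
    have h2 : c / 2 * π = π - π * κ / 2 := by rw [hc]; ring
    rw [h2, Real.tan_eq_sin_div_cos, Real.sin_pi_sub, Real.cos_pi_sub, hsinp, hcosp]
    rw [div_neg, neg_div]
  -- Gamma facts
  have hQne : Real.Gamma q ≠ 0 := Real.Gamma_ne_zero hqne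
  have hPpos : 0 < Real.Gamma p := Real.Gamma_pos_of_pos hp_pos
  have hCpos : 0 < Real.Gamma c := Real.Gamma_pos_of_pos hc_pos
  have hRpos : 0 < Real.Gamma (p + c) := Real.Gamma_pos_of_pos (by linarith)
  have hq0 : q ≠ 0 := by simpa using hqne 0
  have hq10 : q + 1 ≠ 0 := by simpa using hq1ne 0
  have hR : Real.Gamma (p + c) = (q + 1) * (q * Real.Gamma q) := by
    rw [hpc, Real.Gamma_add_one hq10, Real.Gamma_add_one hq0]
  have hd1 : deriv Real.Gamma (q + 1) = Real.Gamma q + q * deriv Real.Gamma q :=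
    gamma_rec_deriv q hqne
  have hR' : deriv Real.Gamma (p + c)
      = q * Real.Gamma q + (q + 1) * (Real.Gamma q + q * deriv Real.Gamma q) := by
    rw [hpc, gamma_rec_deriv (q + 1) hq1ne, Real.Gamma_add_one hq0, hd1]
  have hrefl : (deriv Real.Gamma p * Real.Gamma q - Real.Gamma p * deriv Real.Gamma q) *
      (Real.sin (π * p)) ^ 2 = -π ^ 2 * Real.cos (π * p) := by
    have h := gamma_reflect_deriv p hpne (by rw [h1p]; exact hqne) hsinp_ne
    rw [h1p] at h
    rw [h]
    field_simp
  have hPQ : Real.Gamma p * Real.Gamma q * Real.sin (π * p) = π := by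
    have h := Real.Gamma_mul_Gamma_one_sub p
    rw [h1p] at h
    rw [h]
    field_simp
  -- derivative computation
  have haval : (1/2 : ℝ) + κ * (1 - 1/2) = p := by rw [hp]; ring
  have ha : HasDerivAt (fun s : ℝ => s + κ * (1 - s)) (1 - κ) (1/2) := by
    have h : HasDerivAt (fun s : ℝ => (1 - κ) * s + κ) (1 - κ) (1/2) := by
      simpa using ((hasDerivAt_id (1/2 : ℝ)).const_mul (1 - κ)).add_const κ
    exact h.congr_of_eventuallyEq (Filter.Eventually.of_forall fun s => by ring)
  have hGp : HasDerivAt Real.Gamma (deriv Real.Gamma p) ((1:ℝ)/2 + κ * (1 - 1/2)) := by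
    rw [haval]; exact (Real.differentiableAt_Gamma hpne).hasDerivAt
  have hG1 : HasDerivAt (fun s : ℝ => Real.Gamma (s + κ * (1 - s)))
      (deriv Real.Gamma p * (1 - κ)) (1/2) := by
    simpa [Function.comp_def] using hGp.comp (1/2 : ℝ) ha
  have hGpc : HasDerivAt Real.Gamma (deriv Real.Gamma (p + c)) ((1:ℝ)/2 + κ * (1 - 1/2) + c) := by
    rw [haval]; exact (Real.differentiableAt_Gamma (pos_ne _ (by linarith))).hasDerivAt
  have hG2 : HasDerivAt (fun s : ℝ => Real.Gamma (s + κ * (1 - s) + c))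
      (deriv Real.Gamma (p + c) * (1 - κ)) (1/2) := by
    simpa [Function.comp_def] using hGpc.comp (1/2 : ℝ) (ha.add_const c)
  have hpoly : HasDerivAt (fun s : ℝ => s * (1 - s * (κ - 1))) (2 - κ) (1/2) := by
    have h : HasDerivAt (fun s : ℝ => s * (1 - s * (κ - 1)))
        (1 * (1 - 1/2 * (κ - 1)) + 1/2 * (0 - 1 * (κ - 1))) (1/2) :=
      (hasDerivAt_id (1/2:ℝ)).fun_mul ((hasDerivAt_const (1/2:ℝ) 1).sub
        ((hasDerivAt_id (1/2:ℝ)).mul_const (κ - 1)))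
    convert h using 1; ring
  have hR20 : Real.Gamma ((1/2:ℝ) + κ * (1 - 1/2) + c) ≠ 0 := by
    rw [haval]; exact ne_of_gt hRpos
  have hB : HasDerivAt (fun s : ℝ => Real.Gamma (s + κ * (1 - s)) * Real.Gamma c /
      Real.Gamma (s + κ * (1 - s) + c))
      ((deriv Real.Gamma p * (1 - κ) * Real.Gamma c * Real.Gamma (p + c)
        - Real.Gamma p * Real.Gamma c * (deriv Real.Gamma (p + c) * (1 - κ)))
        / Real.Gamma (p + c) ^ 2) (1/2) := by
    have h := (hG1.mul_const (Real.Gamma c)).fun_div hG2 hR20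
    refine h.congr_deriv ?_; rw [haval]
  have hf : HasDerivAt (fun s : ℝ => s * (1 - s * (κ - 1)) *
      (Real.Gamma (s + κ * (1 - s)) * Real.Gamma c / Real.Gamma (s + κ * (1 - s) + c)))
      ((2 - κ) * (Real.Gamma ((1:ℝ)/2 + κ * (1 - 1/2)) * Real.Gamma c /
          Real.Gamma ((1:ℝ)/2 + κ * (1 - 1/2) + c))
        + 1/2 * (1 - 1/2 * (κ - 1)) *
          ((deriv Real.Gamma p * (1 - κ) * Real.Gamma c * Real.Gamma (p + c)
            - Real.Gamma p * Real.Gamma c * (deriv Real.Gamma (p + c) * (1 - κ)))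
            / Real.Gamma (p + c) ^ 2)) (1/2) := hpoly.fun_mul hB
  have hD := hf.deriv
  rw [haval] at hD
  have hfun : (fun s : ℝ => s * (1 - s * (κ - 1)) * betaFn (s + κ * (1 - s)) c)
      = fun s : ℝ => s * (1 - s * (κ - 1)) * (Real.Gamma (s + κ * (1 - s)) * Real.Gamma c /
        Real.Gamma (s + κ * (1 - s) + c)) := by
    funext s
    simp only [betaFn]
  constructor
  · rw [hfun, hD, htan]
    show _ = (κ - 1) * (3 - κ) / 4 * π * (Real.cos (π * p) / Real.sin (π * p)) *
        (Real.Gamma p * Real.Gamma c / Real.Gamma (p + c))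
    exact key_alg κ q (Real.Gamma p) (deriv Real.Gamma p) (Real.Gamma q) (deriv Real.Gamma q)
      (Real.Gamma c) (Real.sin (π * p)) (Real.cos (π * p)) π
      (Real.Gamma (p + c)) (deriv Real.Gamma (p + c))
      hQne hq0 hq10 hsinp_ne (by rw [hq]; ring) hR hR' hrefl hPQ
  · have htanpos : 0 < Real.tan (c / 2 * π) := by
      apply Real.tan_pos_of_pos_of_lt_pi_div_two
      · rw [hc]
        exact mul_pos (by linarith : (0:ℝ) < (2 - κ) / 2) pi_pos
      · rw [hc]
        calc (2 - κ) / 2 * π < 1 / 2 * π :=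
              mul_lt_mul_of_pos_right (by linarith) pi_pos
          _ = π / 2 := by ring
    have hbpos : 0 < betaFn p c := by
      unfold betaFn
      positivity
    have h1 : (0:ℝ) < (κ - 1) * (3 - κ) / 4 := by nlinarith
    positivity
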